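/- For all integers 0 ≤ ℓ ≤ n and prime power q ≥ 2, the Gaussian binomial coefficient satisfies 1 < q^{-ℓ(n-ℓ)} · [n choose ℓ]_q < 4, provided 0 < ℓ < n (the lower bound is non-strict equality 1 when ℓ = 0 or ℓ = n). -/

import Mathlib

/-- The Gaussian binomial coefficient `[n choose k]_q`, as a rational number. -/
noncomputable def gaussBinom (q n k : ℕ) : ℚ :=
  ∏ i ∈ Finset.range k, ((q : ℚ) ^ (n - i) - 1) / ((q : ℚ) ^ (k - i) - 1)

/-- Auxiliary: the partial products `∏_{j=1}^m (1 - q^{-j})` stay above `1/4`,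
with the quantitative strengthening needed for induction. -/
lemma gaussBinom_keyQ (q : ℚ) (hq : 2 ≤ q) (m : ℕ) :
    1/4 + 1/(2*q^m) ≤ ∏ j ∈ Finset.range m, (q^(j+1)-1)/q^(j+1) := by
  have hq0 : 0 < q := by linarith
  induction m with
  | zero => norm_num
  | succ m ih =>
    have hpm : (0:ℚ) < q ^ m := pow_pos hq0 m
    have hpm1 : (0:ℚ) < q ^ (m+1) := pow_pos hq0 (m+1)
    have h1 : (1:ℚ) < q^(m+1) := one_lt_pow₀ (by linarith) (by omega)
    have hfac : (0:ℚ) < (q^(m+1)-1)/q^(m+1) := div_pos (by linarith) hpm1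
    rw [Finset.prod_range_succ]
    rcases Nat.eq_zero_or_pos m with rfl | hm
    · simp only [Finset.range_zero, Finset.prod_empty, one_mul, pow_one, zero_add]
      rw [div_add_div _ _ (by norm_num) (by positivity), div_le_div_iff₀ (by positivity) hq0]
      nlinarith
    · have hqm2 : (2:ℚ) ≤ q ^ m := le_trans hq (le_self_pow₀ (by linarith) (by omega))
      have step : 1/4 + 1/(2*q^(m+1)) ≤ (1/4 + 1/(2*q^m)) * ((q^(m+1)-1)/q^(m+1)) := by
        rw [pow_succ]
        field_simp
        have key2 : 3*q^m + 2 ≤ 2*(q^m*q) := by nlinarith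
        nlinarith [mul_le_mul_of_nonneg_left key2 (mul_pos hpm hq0).le, mul_pos hpm hq0]
      calc 1/4 + 1/(2*q^(m+1)) ≤ (1/4 + 1/(2*q^m)) * ((q^(m+1)-1)/q^(m+1)) := step
        _ ≤ _ := mul_le_mul_of_nonneg_right ih (le_of_lt hfac)

/-- For a prime power `q` and `0 ≤ ℓ ≤ n`, the normalized Gaussian binomial
`q^{-ℓ(n-ℓ)}·[n choose ℓ]_q` lies strictly between `1` and `4` when `0 < ℓ < n`,
and equals `1` when `ℓ = 0` or `ℓ = n`. -/
theorem gaussBinom_bounds (q n ℓ : ℕ)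
    (hq : ∃ p k : ℕ, p.Prime ∧ 0 < k ∧ q = p ^ k) (hℓn : ℓ ≤ n) :
    ((0 < ℓ → ℓ < n →
        1 < gaussBinom q n ℓ / (q : ℚ) ^ (ℓ * (n - ℓ)) ∧
        gaussBinom q n ℓ / (q : ℚ) ^ (ℓ * (n - ℓ)) < 4)) ∧
    ((ℓ = 0 ∨ ℓ = n) → gaussBinom q n ℓ / (q : ℚ) ^ (ℓ * (n - ℓ)) = 1) := by
  have hq2n : 2 ≤ q := by
    obtain ⟨p, k, hp, hk, rfl⟩ := hq
    calc 2 ≤ p := hp.two_le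
    _ ≤ p ^ k := Nat.le_self_pow (by omega) p
  have hq2 : (2:ℚ) ≤ (q:ℚ) := by exact_mod_cast hq2n
  have hq0 : (0:ℚ) < q := by linarith
  constructor
  · intro h1 h2
    have hrw : gaussBinom q n ℓ / (q : ℚ) ^ (ℓ * (n - ℓ)) =
        ∏ i ∈ Finset.range ℓ,
          ((q:ℚ)^(n-i) - 1) / ((q:ℚ)^(n-ℓ) * ((q:ℚ)^(ℓ-i) - 1)) := by
      have hpow : (q:ℚ) ^ (ℓ * (n - ℓ)) = ∏ _i ∈ Finset.range ℓ, (q:ℚ)^(n-ℓ) := by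
        rw [Finset.prod_const, Finset.card_range, ← pow_mul, mul_comm ℓ (n-ℓ)]
      rw [hpow, gaussBinom, ← Finset.prod_div_distrib]
      exact Finset.prod_congr rfl fun i hi => by rw [div_div, mul_comm]
    rw [hrw]
    have hne : (Finset.range ℓ).Nonempty := Finset.nonempty_range_iff.mpr (by omega)
    have hfactor : ∀ i ∈ Finset.range ℓ,
        1 < ((q:ℚ)^(n-i) - 1) / ((q:ℚ)^(n-ℓ) * ((q:ℚ)^(ℓ-i) - 1)) := by
      intro i hi
      rw [Finset.mem_range] at hi
      have h1li : (1:ℚ) < (q:ℚ)^(ℓ-i) := one_lt_pow₀ (by linarith) (by omega)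
      have h1nl : (1:ℚ) < (q:ℚ)^(n-ℓ) := one_lt_pow₀ (by linarith) (by omega)
      have hmul : (q:ℚ)^(n-ℓ) * (q:ℚ)^(ℓ-i) = (q:ℚ)^(n-i) := by
        rw [← pow_add]; congr 1; omega
      rw [lt_div_iff₀ (by nlinarith)]
      nlinarith
    constructor
    · calc (1:ℚ) = ∏ _i ∈ Finset.range ℓ, (1:ℚ) := by simp
        _ < _ := Finset.prod_lt_prod_of_nonempty (by simp) hfactor hne
    · have hle : ∀ i ∈ Finset.range ℓ,
          ((q:ℚ)^(n-i) - 1) / ((q:ℚ)^(n-ℓ) * ((q:ℚ)^(ℓ-i) - 1)) ≤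
          (q:ℚ)^(ℓ-i) / ((q:ℚ)^(ℓ-i) - 1) := by
        intro i hi
        rw [Finset.mem_range] at hi
        have h1li : (1:ℚ) < (q:ℚ)^(ℓ-i) := one_lt_pow₀ (by linarith) (by omega)
        have h1nl : (1:ℚ) < (q:ℚ)^(n-ℓ) := one_lt_pow₀ (by linarith) (by omega)
        have hmul : (q:ℚ)^(n-ℓ) * (q:ℚ)^(ℓ-i) = (q:ℚ)^(n-i) := by
          rw [← pow_add]; congr 1; omega
        rw [div_le_div_iff₀ (by nlinarith) (by linarith)]
        nlinarith
      have hnonneg : ∀ i ∈ Finset.range ℓ,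
          0 ≤ ((q:ℚ)^(n-i) - 1) / ((q:ℚ)^(n-ℓ) * ((q:ℚ)^(ℓ-i) - 1)) :=
        fun i hi => le_of_lt (lt_trans one_pos (hfactor i hi))
      have hprodle := Finset.prod_le_prod hnonneg hle
      have hreflect : ∏ i ∈ Finset.range ℓ, (q:ℚ)^(ℓ-i) / ((q:ℚ)^(ℓ-i) - 1) =
          ∏ j ∈ Finset.range ℓ, (q:ℚ)^(j+1) / ((q:ℚ)^(j+1) - 1) := by
        rw [← Finset.prod_range_reflect (fun j => (q:ℚ)^(j+1) / ((q:ℚ)^(j+1) - 1)) ℓ]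
        refine Finset.prod_congr rfl fun i hi => ?_
        rw [Finset.mem_range] at hi
        have h : ℓ - 1 - i + 1 = ℓ - i := by omega
        simp only [h]
      have hinv : ∏ j ∈ Finset.range ℓ, (q:ℚ)^(j+1) / ((q:ℚ)^(j+1) - 1) =
          (∏ j ∈ Finset.range ℓ, ((q:ℚ)^(j+1) - 1) / (q:ℚ)^(j+1))⁻¹ := by
        rw [← Finset.prod_inv_distrib]
        exact Finset.prod_congr rfl fun j _ => (inv_div _ _).symm
      have hQ := gaussBinom_keyQ (q:ℚ) hq2 ℓ
      have hQ4 : (1:ℚ)/4 < ∏ j ∈ Finset.range ℓ, ((q:ℚ)^(j+1) - 1) / (q:ℚ)^(j+1) := by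
        have : (0:ℚ) < 1/(2*(q:ℚ)^ℓ) := by positivity
        linarith
      have hlast : (∏ j ∈ Finset.range ℓ, ((q:ℚ)^(j+1) - 1) / (q:ℚ)^(j+1))⁻¹ < 4 := by
        rw [inv_lt_iff_one_lt_mul₀ (by linarith)]
        linarith
      calc _ ≤ _ := hprodle
        _ < 4 := by rw [hreflect, hinv]; exact hlast
  · rintro (rfl | rfl)
    · simp [gaussBinom]
    · have hg : gaussBinom q ℓ ℓ = 1 :=
        Finset.prod_eq_one fun i hi => by
          apply div_self
          rw [Finset.mem_range] at hi
          have : (1:ℚ) < (q:ℚ)^(ℓ-i) := one_lt_pow₀ (by linarith) (by omega)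
          linarith
      simp [hg]
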